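/- Let H ≥ 1, α_k = (H+1)/(H+k), α_k^t = α_t ∏_{i=t+1}^k(1−α_i). Then ∑_{t=1}^k α_k^t α_t² H² ≤ (H+1)³/k for all k ≥ 1. -/

import Mathlib

open Finset

theorem weighted_alpha_sq_H_bound
    (H : ℕ) (hH : 1 ≤ H)
    (α : ℕ → ℝ) (hα : ∀ k, α k = (H + 1 : ℝ) / (H + k))
    (αw : ℕ → ℕ → ℝ)
    (hαw : ∀ k t, αw k t = α t * ∏ i ∈ Finset.Icc (t + 1) k, (1 - α i)) :
    ∀ k ≥ 1, ∑ t ∈ Finset.Icc 1 k, αw k t * (α t) ^ 2 * (H : ℝ) ^ 2 ≤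
      (H + 1 : ℝ) ^ 3 / k := by
  have hHr : (1 : ℝ) ≤ (H : ℝ) := by exact_mod_cast hH
  intro k hk
  induction k, hk using Nat.le_induction with
  | base =>
    have h1 : α 1 = 1 := by
      rw [hα]; field_simp; norm_num
    have h2 : αw 1 1 = 1 := by
      rw [hαw, h1]; simp
    simp only [Finset.Icc_self, Finset.sum_singleton, h1, h2, Nat.cast_one]
    rw [div_one]
    nlinarith
  | succ k hk ih =>
    have hKr : (1 : ℝ) ≤ (k : ℝ) := by exact_mod_cast hk
    have hden : (0 : ℝ) < (H : ℝ) + (k + 1) := by positivity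
    have ha1 : α (k + 1) = (H + 1 : ℝ) / (H + (k + 1)) := by
      rw [hα]; push_cast; ring_nf
    have hanonneg : 0 ≤ 1 - α (k + 1) := by
      rw [ha1]; rw [sub_nonneg]
      rw [div_le_one hden]; linarith
    -- split the sum
    have hsplit : Finset.Icc 1 (k + 1) = insert (k + 1) (Finset.Icc 1 k) := by
      ext i; simp [Finset.mem_Icc]; omega
    have hwk : αw (k + 1) (k + 1) = α (k + 1) := by
      rw [hαw]; simp
    have hstep : ∀ t ∈ Finset.Icc 1 k, αw (k + 1) t = αw k t * (1 - α (k + 1)) := by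
      intro t ht
      simp only [Finset.mem_Icc] at ht
      rw [hαw, hαw, Finset.prod_Icc_succ_top (by omega : t + 1 ≤ k + 1)]
      ring
    rw [hsplit, Finset.sum_insert (by simp)]
    have hrw : ∑ t ∈ Finset.Icc 1 k, αw (k + 1) t * α t ^ 2 * (H : ℝ) ^ 2
        = (1 - α (k + 1)) * ∑ t ∈ Finset.Icc 1 k, αw k t * α t ^ 2 * (H : ℝ) ^ 2 := by
      rw [Finset.mul_sum]
      apply Finset.sum_congr rfl
      intro t ht
      rw [hstep t ht]; ring
    rw [hrw, hwk]
    have hbound : (1 - α (k + 1)) * ∑ t ∈ Finset.Icc 1 k, αw k t * α t ^ 2 * (H : ℝ) ^ 2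
        ≤ (1 - α (k + 1)) * ((H + 1 : ℝ) ^ 3 / k) :=
      mul_le_mul_of_nonneg_left ih hanonneg
    have key : α (k + 1) * α (k + 1) ^ 2 * (H : ℝ) ^ 2
        + (1 - α (k + 1)) * ((H + 1 : ℝ) ^ 3 / k) ≤ (H + 1 : ℝ) ^ 3 / ((k : ℝ) + 1) := by
      rw [ha1]
      set x := (H : ℝ)
      set K := (k : ℝ)
      have hK0 : (0 : ℝ) < K := by linarith
      have hK1 : (0 : ℝ) < K + 1 := by linarith
      have hd : (0 : ℝ) < x + (K + 1) := hden
      have e1 : 1 - (x + 1) / (x + (K + 1)) = K / (x + (K + 1)) := by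
        field_simp; ring
      rw [e1]
      have h3 : (x + 1) / (x + (K + 1)) * ((x + 1) / (x + (K + 1))) ^ 2 * x ^ 2
          + K / (x + (K + 1)) * ((x + 1) ^ 3 / K)
          = ((x + 1) ^ 3 * (x ^ 2 + (x + (K + 1)) ^ 2)) / (x + (K + 1)) ^ 3 := by
        field_simp
      rw [h3, div_le_div_iff₀ (by positivity) hK1]
      have hx0 : (0 : ℝ) < x := by linarith
      have hkey : (K + 1) * x ≤ (x + (K + 1)) ^ 2 := by nlinarith
      nlinarith [mul_nonneg (mul_nonneg (by positivity : (0:ℝ) ≤ (x+1)^3) hx0.le)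
        (sub_nonneg.2 hkey)]
    push_cast
    calc α (k + 1) * α (k + 1) ^ 2 * (H : ℝ) ^ 2
          + (1 - α (k + 1)) * ∑ t ∈ Finset.Icc 1 k, αw k t * α t ^ 2 * (H : ℝ) ^ 2
        ≤ α (k + 1) * α (k + 1) ^ 2 * (H : ℝ) ^ 2
          + (1 - α (k + 1)) * ((H + 1 : ℝ) ^ 3 / k) := by linarith
      _ ≤ (H + 1 : ℝ) ^ 3 / ((k : ℝ) + 1) := key
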